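/- Let (B^{(k)})_{k∈ℤ} be a sequence in SL(2,ℝ) with sup_{k} ‖B^{(k)}‖ ≤ C < ∞ and β := inf_{k} ‖B^{(k)}‖ > 1. For each k let s_k = s(B^{(k)}) and u_k = u(B^{(k)}) be the most contracted directions of B^{(k)} and of (B^{(k)})^{−1}, and suppose γ := inf_{k∈ℤ} |tan ∠(s_k, u_{k−1})| > 2/(β − β^{−1}), where ∠(ℓ,ℓ′) denotes the angle between the two lines ℓ, ℓ′ ∈ ℝP¹. Then there exists ρ > 1 such that ‖B^{(k+n−1)} ⋯ B^{(k+1)} B^{(k)}‖ > ρ^n for every k ∈ ℤ and every n ≥ 1. -/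

import Mathlib

open scoped Real
open Matrix

noncomputable section

/-- 2×2 real matrices. -/
abbrev M2 : Type := Matrix (Fin 2) (Fin 2) ℝ

/-- Rotation matrix by angle θ. -/
def rot (θ : ℝ) : M2 := !![Real.cos θ, -Real.sin θ; Real.sin θ, Real.cos θ]

/-- Euclidean norm of a vector in ℝ². -/
def vnorm (w : Fin 2 → ℝ) : ℝ := ‖(WithLp.equiv 2 (Fin 2 → ℝ)).symm w‖

/-- Operator norm of a 2×2 real matrix acting on Euclidean ℝ². -/
def opNorm (A : M2) : ℝ := ‖Matrix.toEuclideanCLM (𝕜 := ℝ) A‖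

/-- Forward iterates B_n(x) = B(x+(n-1)β)⋯B(x+β)B(x). -/
def fwdIter (β : ℝ) (B : ℝ → M2) : ℕ → ℝ → M2
  | 0, _ => 1
  | n + 1, x => B (x + n * β) * fwdIter β B n x

/-- Cocycle iterates indexed by ℤ: B₀ = Id, B_n for n ≥ 1 as above, and
B_n(x) = [B_{-n}(x+nβ)]⁻¹ for n ≤ -1. -/
def cocycleIter (β : ℝ) (B : ℝ → M2) (n : ℤ) (x : ℝ) : M2 :=
  if 0 ≤ n then fwdIter β B n.toNat x else (fwdIter β B (-n).toNat (x + (n : ℝ) * β))⁻¹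

/-- Uniform hyperbolicity of the cocycle (β, B) over the circle ℝ/ℤ
(B is understood as a 1-periodic function of x): there are invariant 1-periodic line fields
s̄ (stable) and ū (unstable) with uniform exponential contraction forwards resp. backwards. -/
def IsUH (β : ℝ) (B : ℝ → M2) : Prop :=
  ∃ (s u : ℝ → Submodule ℝ (Fin 2 → ℝ)) (c ρ : ℝ),
    0 < c ∧ 1 < ρ ∧
    (∀ x, Module.finrank ℝ (s x) = 1 ∧ Module.finrank ℝ (u x) = 1) ∧
    (∀ x, s (x + 1) = s x ∧ u (x + 1) = u x) ∧
    (∀ x, (s x).map (Matrix.toLin' (B x)) = s (x + β) ∧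
          (u x).map (Matrix.toLin' (B x)) = u (x + β)) ∧
    (∀ x, ∀ n : ℕ, 1 ≤ n →
      (∀ w : Fin 2 → ℝ, w ∈ s x → vnorm w = 1 →
        vnorm ((cocycleIter β B n x) *ᵥ w) < c / ρ ^ n) ∧
      (∀ w : Fin 2 → ℝ, w ∈ u x → vnorm w = 1 →
        vnorm ((cocycleIter β B (-(n : ℤ)) x) *ᵥ w) < c / ρ ^ n))

/-- The Diophantine condition DC_{τ,γ}. -/
def DCwith (τ γ α : ℝ) : Prop :=
  ∀ p q : ℤ, q ≠ 0 → γ / |(q : ℝ)| ^ τ ≤ |α - (p : ℝ) / (q : ℝ)|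

/-- The Diophantine condition DC_τ = ∪_{γ>0} DC_{τ,γ}. -/
def DC (τ α : ℝ) : Prop := ∃ γ > 0, DCwith τ γ α

/-- Condition (V) for a 1-periodic potential: C², the derivative vanishes at exactly two
points of the circle, one a global minimum and the other a global maximum, both
non-degenerate. -/
def ConditionV (v : ℝ → ℝ) : Prop :=
  ContDiff ℝ 2 v ∧
  ∃ z₁ z₂ : ℝ, z₁ ∈ Set.Ico (0 : ℝ) 1 ∧ z₂ ∈ Set.Ico (0 : ℝ) 1 ∧ z₁ ≠ z₂ ∧
    (∀ x ∈ Set.Ico (0 : ℝ) 1, deriv v x = 0 ↔ x = z₁ ∨ x = z₂) ∧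
    (∀ x, v z₁ ≤ v x) ∧ (∀ x, v x ≤ v z₂) ∧
    iteratedDeriv 2 v z₁ ≠ 0 ∧ iteratedDeriv 2 v z₂ ≠ 0

/-- The Schrödinger cocycle map A^{(E-λv)}. -/
def schCocycle (lam : ℝ) (v : ℝ → ℝ) (E : ℝ) (x : ℝ) : M2 :=
  !![E - lam * v x, -1; 1, 0]

/-- Ordered products B^{(k+n-1)} ⋯ B^{(k+1)} B^{(k)} of a two-sided sequence of matrices. -/
def seqProd (B : ℤ → M2) (k : ℤ) : ℕ → M2
  | 0 => 1
  | n + 1 => B (k + n) * seqProd B k n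

set_option maxHeartbeats 1000000

section Helpers

def ip (x y : Fin 2 → ℝ) : ℝ := x 0 * y 0 + x 1 * y 1
def dt (x y : Fin 2 → ℝ) : ℝ := x 0 * y 1 - x 1 * y 0

lemma ip_comm (x y : Fin 2 → ℝ) : ip x y = ip y x := by unfold ip; ring

lemma lagrange (x y : Fin 2 → ℝ) : (ip x y)^2 + (dt x y)^2 = ip x x * ip y y := by
  unfold ip dt; ring

lemma ip_comb (c d c' d' : ℝ) (x y : Fin 2 → ℝ) (hxx : ip x x = 1) (hyy : ip y y = 1)
    (hxy : ip x y = 0) : ip (c • x + d • y) (c' • x + d' • y) = c * c' + d * d' := by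
  unfold ip at *
  simp only [Pi.add_apply, Pi.smul_apply, smul_eq_mul]
  linear_combination c*c'*hxx + d*d'*hyy + (c*d'+c'*d)*hxy

lemma ip_comb_left (c d : ℝ) (x y z : Fin 2 → ℝ) :
    ip (c • x + d • y) z = c * ip x z + d * ip y z := by
  unfold ip; simp only [Pi.add_apply, Pi.smul_apply, smul_eq_mul]; ring

lemma dt_comb_left (c d : ℝ) (x y z : Fin 2 → ℝ) :
    dt (c • x + d • y) z = c * dt x z + d * dt y z := by
  unfold dt; simp only [Pi.add_apply, Pi.smul_apply, smul_eq_mul]; ring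

lemma dt_comb_right (c d : ℝ) (x y z : Fin 2 → ℝ) :
    dt z (c • x + d • y) = c * dt z x + d * dt z y := by
  unfold dt; simp only [Pi.add_apply, Pi.smul_apply, smul_eq_mul]; ring

lemma dt_self (x : Fin 2 → ℝ) : dt x x = 0 := by unfold dt; ring

/-- expansion in an orthonormal basis -/
lemma expand (e f x : Fin 2 → ℝ) (he : ip e e = 1) (hf : ip f f = 1) (hef : ip e f = 0) :
    x = (ip x e) • e + (ip x f) • f := by
  unfold ip at *
  obtain ⟨σ, hσ1, hf0, hf1⟩ : ∃ σ : ℝ, σ^2 = 1 ∧ f 0 = -σ * e 1 ∧ f 1 = σ * e 0 := by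
    refine ⟨e 0 * f 1 - e 1 * f 0, ?_, ?_, ?_⟩
    · have := lagrange e f
      unfold ip dt at this
      nlinarith [this]
    · linear_combination e 0 * hef - f 0 * he
    · linear_combination e 1 * hef - f 1 * he
  have h0 : x 0 = (x 0 * e 0 + x 1 * e 1) * e 0 + (x 0 * f 0 + x 1 * f 1) * f 0 := by
    rw [hf0, hf1]
    linear_combination (x 1 * e 0 * e 1 - x 0 * e 1^2) * hσ1 - x 0 * he
  have h1 : x 1 = (x 0 * e 0 + x 1 * e 1) * e 1 + (x 0 * f 0 + x 1 * f 1) * f 1 := by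
    rw [hf0, hf1]
    linear_combination (x 0 * e 0 * e 1 - x 1 * e 0^2) * hσ1 - x 1 * he
  funext i
  fin_cases i
  · simpa using h0
  · simpa using h1

lemma vnorm_eq (w : Fin 2 → ℝ) : vnorm w = Real.sqrt (ip w w) := by
  rw [vnorm, EuclideanSpace.norm_eq]
  congr 1
  simp [ip, Fin.sum_univ_two, sq_abs, sq]

lemma ip_self_nonneg (w : Fin 2 → ℝ) : 0 ≤ ip w w := by
  unfold ip; nlinarith [sq_nonneg (w 0), sq_nonneg (w 1)]

lemma vnorm_nonneg (w : Fin 2 → ℝ) : 0 ≤ vnorm w := by rw [vnorm_eq]; positivity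

lemma vnorm_sq (w : Fin 2 → ℝ) : vnorm w ^ 2 = ip w w := by
  rw [vnorm_eq, Real.sq_sqrt (ip_self_nonneg w)]

lemma vnorm_one (w : Fin 2 → ℝ) (h : ip w w = 1) : vnorm w = 1 := by
  rw [vnorm_eq, h, Real.sqrt_one]

lemma ip_smul_smul (c : ℝ) (w : Fin 2 → ℝ) : ip (c • w) (c • w) = c^2 * ip w w := by
  unfold ip; simp only [Pi.smul_apply, smul_eq_mul]; ring

lemma vnorm_smul (c : ℝ) (w : Fin 2 → ℝ) : vnorm (c • w) = |c| * vnorm w := by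
  rw [vnorm_eq, vnorm_eq, ip_smul_smul, Real.sqrt_mul (sq_nonneg c), Real.sqrt_sq_eq_abs]

lemma vnorm_mulVec_le (A : M2) (w : Fin 2 → ℝ) :
    vnorm (A *ᵥ w) ≤ opNorm A * vnorm w := by
  have := (Matrix.toEuclideanCLM (𝕜 := ℝ) A).le_opNorm ((WithLp.equiv 2 (Fin 2 → ℝ)).symm w)
  exact this

lemma opNorm_le_of (A : M2) (c : ℝ) (hc : 0 ≤ c)
    (h : ∀ w, vnorm (A *ᵥ w) ≤ c * vnorm w) : opNorm A ≤ c := by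
  apply ContinuousLinearMap.opNorm_le_bound _ hc
  intro x
  have := h (WithLp.equiv 2 (Fin 2 → ℝ) x)
  simp only [vnorm] at this
  rw [show ((WithLp.equiv 2 (Fin 2 → ℝ)).symm ((WithLp.equiv 2 (Fin 2 → ℝ)) x)) = x from rfl] at this
  have e : (Matrix.toEuclideanCLM (𝕜 := ℝ) A) x
      = (WithLp.equiv 2 (Fin 2 → ℝ)).symm (A *ᵥ (WithLp.equiv 2 (Fin 2 → ℝ)) x) := by
    rw [← Matrix.toLin'_apply]; rfl
  rw [e]
  exact this

lemma ip_mulVec (A : M2) (x y : Fin 2 → ℝ) :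
    ip (A *ᵥ x) (A *ᵥ y) = (A 0 0^2 + A 1 0^2) * (x 0 * y 0)
      + (A 0 0 * A 0 1 + A 1 0 * A 1 1) * (x 0 * y 1 + x 1 * y 0)
      + (A 0 1^2 + A 1 1^2) * (x 1 * y 1) := by
  simp [ip, Matrix.mulVec, dotProduct, Fin.sum_univ_two]; ring

lemma mulVec_comb (A : M2) (c d : ℝ) (x y : Fin 2 → ℝ) :
    A *ᵥ (c • x + d • y) = c • (A *ᵥ x) + d • (A *ᵥ y) := by
  rw [Matrix.mulVec_add, Matrix.mulVec_smul, Matrix.mulVec_smul]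

/-- existence of a unit eigenvector for the top eigenvalue of AᵀA -/
lemma eig_exists (p q r lam : ℝ) (hpr : p * r - q^2 = 1)
    (hquad : lam^2 - (p+r)*lam + 1 = 0) :
    ∃ e : Fin 2 → ℝ, ip e e = 1 ∧ p * e 0 + q * e 1 = lam * e 0 ∧
      q * e 0 + r * e 1 = lam * e 1 := by
  by_cases h1 : q^2 + (lam - p)^2 = 0
  · by_cases h2 : (lam - r)^2 + q^2 = 0
    · -- degenerate: q = 0, lam = p = r
      have hq : q = 0 := by nlinarith [sq_nonneg q, sq_nonneg (lam - p)]
      have hp : lam = p := by nlinarith [sq_nonneg q, sq_nonneg (lam - p)]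
      refine ⟨![1, 0], by simp [ip], by simp [← hp], by simp [hq]⟩
    · -- use eigenvector (lam - r, q)
      have hn : 0 < (lam - r)^2 + q^2 := by
        rcases lt_or_eq_of_le (by positivity : (0:ℝ) ≤ (lam - r)^2 + q^2) with h | h
        · exact h
        · exact absurd h.symm h2
      set m := Real.sqrt ((lam - r)^2 + q^2) with hm
      have hm0 : 0 < m := Real.sqrt_pos.mpr hn
      have hm2 : m^2 = (lam - r)^2 + q^2 := Real.sq_sqrt hn.le
      refine ⟨![(lam - r)/m, q/m], ?_, ?_, ?_⟩
      · show (lam-r)/m * ((lam-r)/m) + q/m * (q/m) = 1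
        field_simp
        linear_combination -hm2
      · show p * ((lam-r)/m) + q * (q/m) = lam * ((lam-r)/m)
        field_simp
        linear_combination -hquad - hpr
      · show q * ((lam-r)/m) + r * (q/m) = lam * (q/m)
        field_simp
        ring
  · -- use eigenvector (q, lam - p)
    have hn : 0 < q^2 + (lam - p)^2 := by
      rcases lt_or_eq_of_le (by positivity : (0:ℝ) ≤ q^2 + (lam-p)^2) with h | h
      · exact h
      · exact absurd h.symm h1
    set m := Real.sqrt (q^2 + (lam - p)^2) with hm
    have hm0 : 0 < m := Real.sqrt_pos.mpr hn
    have hm2 : m^2 = q^2 + (lam - p)^2 := Real.sq_sqrt hn.le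
    refine ⟨![q/m, (lam - p)/m], ?_, ?_, ?_⟩
    · show q/m * (q/m) + (lam-p)/m * ((lam-p)/m) = 1
      field_simp
      linear_combination -hm2
    · show p * (q/m) + q * ((lam-p)/m) = lam * (q/m)
      field_simp
      ring
    · show q * (q/m) + r * ((lam-p)/m) = lam * ((lam-p)/m)
      field_simp
      linear_combination -hquad - hpr

lemma ip_smul_pair (c d : ℝ) (x y : Fin 2 → ℝ) : ip (c • x) (d • y) = c * d * ip x y := by
  unfold ip; simp only [Pi.smul_apply, smul_eq_mul]; ring

lemma ip_comb_gen (c d : ℝ) (x y : Fin 2 → ℝ) :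
    ip (c • x + d • y) (c • x + d • y)
      = c^2 * ip x x + 2*c*d * ip x y + d^2 * ip y y := by
  unfold ip; simp only [Pi.add_apply, Pi.smul_apply, smul_eq_mul]; ring

lemma quad_bound (lam mu c d : ℝ) (h : mu ≤ lam) :
    c^2 * lam + 2*c*d*0 + d^2 * mu ≤ lam * (c^2 + d^2) := by
  nlinarith [sq_nonneg d]

lemma exists_svd (A : M2) (hdet : A.det = 1) :
    ∃ s e u v : Fin 2 → ℝ,
      ip s s = 1 ∧ ip e e = 1 ∧ ip s e = 0 ∧ ip u u = 1 ∧ ip v v = 1 ∧ ip v u = 0 ∧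
      A *ᵥ s = (opNorm A)⁻¹ • v ∧ A *ᵥ e = opNorm A • u ∧ 1 ≤ opNorm A := by
  have hdet2 : A 0 0 * A 1 1 - A 0 1 * A 1 0 = 1 := by
    rw [Matrix.det_fin_two] at hdet; linarith
  set p := A 0 0^2 + A 1 0^2 with hp
  set q := A 0 0 * A 0 1 + A 1 0 * A 1 1 with hq
  set r := A 0 1^2 + A 1 1^2 with hr
  have hpr : p * r - q^2 = 1 := by
    rw [hp, hq, hr]
    linear_combination (A 0 0 * A 1 1 - A 0 1 * A 1 0 + 1) * hdet2
  have hp0 : 0 ≤ p := by rw [hp]; positivity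
  have hr0 : 0 ≤ r := by rw [hr]; positivity
  clear_value p q r
  set D := Real.sqrt ((p - r)^2 + 4*q^2) with hD
  have hD0 : 0 ≤ D := Real.sqrt_nonneg _
  have hD2 : D^2 = (p - r)^2 + 4*q^2 := Real.sq_sqrt (by positivity)
  clear_value D
  set lam := (p + r + D)/2 with hlam
  have hT : 2 ≤ p + r := by nlinarith [sq_nonneg (p - r), sq_nonneg q, sq_nonneg (p + r - 2)]
  have hlam1 : 1 ≤ lam := by rw [hlam]; nlinarith
  have hquad : lam^2 - (p+r)*lam + 1 = 0 := by
    rw [hlam]; linear_combination (1/4) * hD2 - hpr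
  clear_value lam
  obtain ⟨e, hee, heig1, heig2⟩ := eig_exists p q r lam hpr hquad
  have hee' : e 0 * e 0 + e 1 * e 1 = 1 := hee
  set sv : Fin 2 → ℝ := ![-(e 1), e 0] with hsv
  have hsv0 : sv 0 = -(e 1) := rfl
  have hsv1 : sv 1 = e 0 := rfl
  have hss : ip sv sv = 1 := by unfold ip; rw [hsv0, hsv1]; linarith [hee']
  have hse : ip sv e = 0 := by unfold ip; rw [hsv0, hsv1]; ring
  clear_value sv
  set mu := p + r - lam with hmu
  have hmul : lam * mu = 1 := by rw [hmu]; linear_combination -hquad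
  clear_value mu
  have hlam0 : 0 < lam := by linarith
  have hmu_eq : mu = 1/lam := by
    rw [eq_div_iff hlam0.ne']
    linear_combination hmul
  have hmu0 : 0 < mu := by rw [hmu_eq]; positivity
  have hmu_le : mu ≤ lam := by
    rw [hmu_eq, div_le_iff₀ hlam0]
    calc (1:ℝ) = 1*1 := by ring
      _ ≤ lam * lam := mul_le_mul hlam1 hlam1 zero_le_one (by linarith)
  have seig1 : p * sv 0 + q * sv 1 = mu * sv 0 := by
    rw [hsv0, hsv1, hmu]; linear_combination heig2
  have seig2 : q * sv 0 + r * sv 1 = mu * sv 1 := by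
    rw [hsv0, hsv1, hmu]; linear_combination -heig1
  have hQee : ip (A *ᵥ e) (A *ᵥ e) = lam := by
    rw [ip_mulVec, ← hp, ← hq, ← hr]
    linear_combination e 0 * heig1 + e 1 * heig2 + lam * hee'
  have hQss : ip (A *ᵥ sv) (A *ᵥ sv) = mu := by
    rw [ip_mulVec, ← hp, ← hq, ← hr]
    have h2 : sv 0 * sv 0 + sv 1 * sv 1 = 1 := hss
    linear_combination sv 0 * seig1 + sv 1 * seig2 + mu * h2
  have hQes : ip (A *ᵥ e) (A *ᵥ sv) = 0 := by
    rw [ip_mulVec, ← hp, ← hq, ← hr, hsv0, hsv1]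
    linear_combination (-(e 1)) * heig1 + e 0 * heig2
  set a := Real.sqrt lam with ha2'
  have ha : a = Real.sqrt lam := ha2'
  clear_value a
  have ha2 : a^2 = lam := by rw [ha]; exact Real.sq_sqrt (by linarith)
  have ha0 : 0 < a := by rw [ha]; exact Real.sqrt_pos.mpr (by linarith)
  have ha1 : 1 ≤ a := by
    rw [ha, show (1:ℝ) = Real.sqrt 1 by simp]
    exact Real.sqrt_le_sqrt (by linarith)
  -- operator norm equals a
  have hub : opNorm A ≤ a := by
    apply opNorm_le_of _ _ ha0.le
    intro w
    have hes : ip e sv = 0 := by rw [ip_comm]; exact hse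
    have hw := expand e sv w hee hss hes
    set c := ip w e with hc
    set d := ip w sv with hd
    clear_value c d
    have hiww : ip w w = c^2 + d^2 := by
      conv_lhs => rw [hw]
      rw [ip_comb _ _ _ _ _ _ hee hss hes]; ring
    have hAw : ip (A *ᵥ w) (A *ᵥ w) ≤ lam * ip w w := by
      conv_lhs => rw [hw]
      rw [mulVec_comb, ip_comb_gen, hQee, hQes, hQss, hiww]
      exact quad_bound lam mu c d hmu_le
    rw [vnorm_eq, vnorm_eq]
    calc Real.sqrt (ip (A *ᵥ w) (A *ᵥ w)) ≤ Real.sqrt (lam * ip w w) :=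
          Real.sqrt_le_sqrt hAw
      _ = a * Real.sqrt (ip w w) := by
          rw [Real.sqrt_mul (by linarith), ha]
  have hlb : a ≤ opNorm A := by
    have h1 := vnorm_mulVec_le A e
    rw [vnorm_one e hee, mul_one, vnorm_eq, hQee] at h1
    rw [ha]
    exact h1
  have hop : opNorm A = a := le_antisymm hub hlb
  refine ⟨sv, e, a⁻¹ • (A *ᵥ e), a • (A *ᵥ sv), hss, hee, hse,
    ?_, ?_, ?_, ?_, ?_, ?_⟩
  · rw [ip_smul_pair, hQee, ← ha2]
    field_simp
  · rw [ip_smul_pair, hQss]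
    linear_combination mu * ha2 + hmul
  · rw [ip_smul_pair]
    rw [ip_comm, hQes]
    ring
  · rw [hop, smul_smul, inv_mul_cancel₀ ha0.ne', one_smul]
  · rw [hop, smul_smul, mul_inv_cancel₀ ha0.ne', one_smul]
  · rw [hop]; exact ha1

lemma inv_quad (a c d : ℝ) (ha : 1 ≤ a) :
    (c*a)*(c*a) + (d*a⁻¹)*(d*a⁻¹) ≤ a^2 * (c^2 + d^2) := by
  have h0 : 0 < a := lt_of_lt_of_le one_pos ha
  have h1 : a⁻¹ ≤ 1 := by
    rw [inv_le_one_iff₀]; right; exact ha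
  have h2 : 0 ≤ a⁻¹ := inv_nonneg.mpr h0.le
  have h4 : a⁻¹ * a⁻¹ ≤ 1 := by nlinarith
  have h3 : (d*a⁻¹)*(d*a⁻¹) ≤ d^2 := by nlinarith [sq_nonneg d]
  have h5 : (1:ℝ) ≤ a * a := by nlinarith
  nlinarith [sq_nonneg c, sq_nonneg d, mul_nonneg (by nlinarith : (0:ℝ) ≤ a*a - 1) (sq_nonneg d)]

lemma svd_inv (A : M2) (hdet : A.det = 1) (s e u v : Fin 2 → ℝ)
    (hss : ip s s = 1) (hee : ip e e = 1) (hse : ip s e = 0)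
    (huu : ip u u = 1) (hvv : ip v v = 1) (hvu : ip v u = 0)
    (hAs : A *ᵥ s = (opNorm A)⁻¹ • v) (hAe : A *ᵥ e = opNorm A • u)
    (hA1 : 1 ≤ opNorm A) :
    opNorm A⁻¹ = opNorm A ∧ A⁻¹ *ᵥ u = (opNorm A)⁻¹ • e := by
  set a := opNorm A with haop
  have ha0 : 0 < a := lt_of_lt_of_le one_pos hA1
  have hInv : ∀ x : Fin 2 → ℝ, A⁻¹ *ᵥ (A *ᵥ x) = x := by
    intro x
    rw [Matrix.mulVec_mulVec, Matrix.nonsing_inv_mul A (by rw [hdet]; exact isUnit_one),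
      Matrix.one_mulVec]
  have hiu : A⁻¹ *ᵥ u = a⁻¹ • e := by
    have h := hInv e
    rw [hAe, Matrix.mulVec_smul] at h
    calc A⁻¹ *ᵥ u = a⁻¹ • (a • (A⁻¹ *ᵥ u)) := by
          rw [smul_smul, inv_mul_cancel₀ ha0.ne', one_smul]
      _ = a⁻¹ • e := by rw [h]
  have hiv : A⁻¹ *ᵥ v = a • s := by
    have h := hInv s
    rw [hAs, Matrix.mulVec_smul] at h
    calc A⁻¹ *ᵥ v = a • (a⁻¹ • (A⁻¹ *ᵥ v)) := by
          rw [smul_smul, mul_inv_cancel₀ ha0.ne', one_smul]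
      _ = a • s := by rw [h]
  constructor
  · apply le_antisymm
    · apply opNorm_le_of _ _ ha0.le
      intro w
      have hw := expand v u w hvv huu hvu
      set c := ip w v with hc
      set d := ip w u with hd
      clear_value c d
      have hiww : ip w w = c^2 + d^2 := by
        conv_lhs => rw [hw]
        rw [ip_comb _ _ _ _ _ _ hvv huu hvu]; ring
      have hQ : ip (A⁻¹ *ᵥ w) (A⁻¹ *ᵥ w) ≤ a^2 * ip w w := by
        conv_lhs => rw [hw]
        rw [mulVec_comb, hiv, hiu, smul_smul, smul_smul,
          ip_comb _ _ _ _ _ _ hss hee hse, hiww]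
        exact inv_quad a c d hA1
      rw [vnorm_eq, vnorm_eq]
      calc Real.sqrt (ip (A⁻¹ *ᵥ w) (A⁻¹ *ᵥ w)) ≤ Real.sqrt (a^2 * ip w w) :=
            Real.sqrt_le_sqrt hQ
        _ = a * Real.sqrt (ip w w) := by
            rw [Real.sqrt_mul (sq_nonneg a), Real.sqrt_sq ha0.le]
    · have h1 := vnorm_mulVec_le A⁻¹ v
      rw [vnorm_one v hvv, mul_one, hiv, vnorm_smul, vnorm_one s hss, mul_one,
        abs_of_pos ha0] at h1
      exact h1
  · exact hiu

lemma dt_antisymm (x y : Fin 2 → ℝ) : dt y x = - dt x y := by unfold dt; ring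

lemma abs_dt_one (x y : Fin 2 → ℝ) (hx : ip x x = 1) (hy : ip y y = 1) (hxy : ip x y = 0) :
    |dt x y| = 1 := by
  have h := lagrange x y
  rw [hx, hy, hxy] at h
  nlinarith [sq_abs (dt x y), abs_nonneg (dt x y)]

/-- the angle propagation inequality -/
lemma angle_step (γ t c d c1 d1 : ℝ) (hγ0 : 0 < γ) (ht0 : 0 < t)
    (hu : c1^2 + d1^2 = 1) (hγc : γ * |c1| ≤ |d1|)
    (hinv : |c*d1 - d*c1| ≤ t * |c*c1 + d*d1|) :
    (γ - t) * |c| ≤ (1 + γ*t) * |d| := by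
  have hd1 : 0 < |d1| := by
    rcases eq_or_lt_of_le (abs_nonneg d1) with h | h
    · exfalso
      have hd0 : d1 = 0 := by rwa [eq_comm, abs_eq_zero] at h
      have hc0 : c1 = 0 := by
        have := hγc
        rw [hd0, abs_zero] at this
        have h2 : |c1| ≤ 0 := by nlinarith [abs_nonneg c1]
        exact abs_eq_zero.mp (le_antisymm h2 (abs_nonneg c1))
      rw [hc0, hd0] at hu; norm_num at hu
    · exact h
  have h1 : |c| * |d1| ≤ |c*d1 - d*c1| + |d| * |c1| := by
    calc |c| * |d1| = |c * d1| := (abs_mul c d1).symm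
      _ = |(c*d1 - d*c1) + d*c1| := by ring_nf
      _ ≤ |c*d1 - d*c1| + |d*c1| := abs_add_le _ _
      _ = |c*d1 - d*c1| + |d| * |c1| := by rw [abs_mul]
  have h2 : |c*c1 + d*d1| ≤ |c| * |c1| + |d| * |d1| := by
    calc |c*c1 + d*d1| ≤ |c*c1| + |d*d1| := abs_add_le _ _
      _ = |c| * |c1| + |d| * |d1| := by rw [abs_mul, abs_mul]
  have h3 : |c| * |d1| ≤ t * (|c| * |c1| + |d| * |d1|) + |d| * |c1| := by
    nlinarith [h1, hinv, h2, ht0]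
  -- multiply by γ and use γ|c1| ≤ |d1|
  have h4 : t * |c| * (γ * |c1|) ≤ t * |c| * |d1| :=
    mul_le_mul_of_nonneg_left hγc (by positivity)
  have h5 : |d| * (γ * |c1|) ≤ |d| * |d1| :=
    mul_le_mul_of_nonneg_left hγc (abs_nonneg d)
  have key : ((γ - t) * |c|) * |d1| ≤ ((1 + γ*t) * |d|) * |d1| := by
    nlinarith [mul_le_mul_of_nonneg_left h3 hγ0.le, h4, h5]
  exact le_of_mul_le_mul_right key hd1

/-- the norm growth inequality -/
lemma grow (β a K c d : ℝ) (hβ : 1 < β) (ha : β ≤ a) (hK0 : 0 ≤ K) (hK : K < β)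
    (hcd : |c| ≤ K * |d|) :
    (β^4 + K^2)/(β^2*(1+K^2)) * (c^2 + d^2) ≤ (c*a⁻¹)*(c*a⁻¹) + (d*a)*(d*a) := by
  have hβ0 : 0 < β := by linarith
  have ha0 : 0 < a := by linarith
  have hc2 : c^2 ≤ K^2 * d^2 := by
    nlinarith [abs_nonneg c, abs_nonneg d, sq_abs c, sq_abs d, mul_nonneg hK0 (abs_nonneg d)]
  have hK2 : K^2 < β^2 := by nlinarith
  -- step 1: monotone in a
  have step1 : c^2/β^2 + d^2*β^2 ≤ (c*a⁻¹)*(c*a⁻¹) + (d*a)*(d*a) := by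
    have hid : (c*a⁻¹)*(c*a⁻¹) + (d*a)*(d*a) - (c^2/β^2 + d^2*β^2)
        = (a^2 - β^2) * (d^2 - c^2/(a^2*β^2)) := by
      field_simp
      ring
    have hge : 0 ≤ (a^2 - β^2) * (d^2 - c^2/(a^2*β^2)) := by
      apply mul_nonneg
      · nlinarith
      · rw [sub_nonneg, div_le_iff₀ (by positivity)]
        have haβ : β^2 ≤ a^2 := by nlinarith
        have h1 : (1:ℝ) ≤ a^2 := by nlinarith
        have h2 : K^2*d^2 ≤ β^2*d^2 := by nlinarith [sq_nonneg d]
        have h3 : β^2*d^2 ≤ a^2*β^2*d^2 := by nlinarith [sq_nonneg d, mul_nonneg (sq_nonneg β) (sq_nonneg d)]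
        nlinarith [hc2]
    linarith [hid, hge]
  -- step 2: the β-level inequality
  have step2 : (β^4 + K^2)/(β^2*(1+K^2)) * (c^2 + d^2) ≤ c^2/β^2 + d^2*β^2 := by
    rw [div_mul_eq_mul_div, div_le_iff₀ (by positivity)]
    have hpoly : (β^4 + K^2) * (c^2 + d^2) ≤ (c^2 + d^2*β^4) * (1 + K^2) := by
      have hb4 : (1:ℝ) ≤ β^4 := one_le_pow₀ hβ.le
      nlinarith [mul_nonneg (by linarith : (0:ℝ) ≤ β^4 - 1) (by linarith [hc2] : (0:ℝ) ≤ K^2*d^2 - c^2)]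
    calc (β^4 + K^2) * (c^2 + d^2) ≤ (c^2 + d^2*β^4) * (1 + K^2) := hpoly
      _ = (c^2/β^2 + d^2*β^2) * (β^2*(1+K^2)) := by field_simp
  linarith

/-- carrying the invariant to the next step -/
lemma newinv (a β t c d K : ℝ) (hcd : |c| ≤ K * |d|) (hKdef : K = β^2*t) (ht0 : 0 < t)
    (hβ : 1 < β) (ha : β ≤ a) : |c| * a⁻¹ ≤ t * (|d| * a) := by
  have ha0 : 0 < a := by linarith
  have h1 : |c| ≤ t * |d| * a^2 := by
    have : K * |d| ≤ t * |d| * a^2 := by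
      rw [hKdef]
      nlinarith [abs_nonneg d, mul_le_mul ha ha (by linarith) ha0.le,
        mul_nonneg (mul_nonneg ht0.le (abs_nonneg d)) (by nlinarith : (0:ℝ) ≤ a*a - β*β)]
    linarith
  rw [show |c| * a⁻¹ = |c| / a by ring, div_le_iff₀ ha0]
  nlinarith [h1]

lemma params (β γ t : ℝ) (hβ : 1 < β) (hγ : 2 / (β - β⁻¹) < γ) (ht : t = 2/(γ*(β^2-1))) :
    0 < γ ∧ 0 < t ∧ β*t < 1 ∧ t < γ ∧ 1 + γ*t ≤ β^2*t*(γ-t) := by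
  have hβ0 : 0 < β := by linarith
  have hb2 : 0 < β^2 - 1 := by nlinarith
  have hid : β - β⁻¹ = (β^2-1)/β := by field_simp
  have hden : 0 < β - β⁻¹ := by rw [hid]; positivity
  have hγ0 : 0 < γ := lt_trans (div_pos two_pos hden) hγ
  have h2γ : 2 < γ*(β-β⁻¹) := by rw [div_lt_iff₀ hden] at hγ; linarith
  have hγβ : 2*β < γ*(β^2-1) := by
    have h := mul_lt_mul_of_pos_right h2γ hβ0
    have hiv : β⁻¹ * β = 1 := inv_mul_cancel₀ hβ0.ne'
    have e : γ*(β-β⁻¹)*β = γ*(β^2-1) := by linear_combination -γ * hiv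
    rw [e] at h; linarith
  have hX : 0 < γ*(β^2-1) := by positivity
  have ht0 : 0 < t := by rw [ht]; positivity
  have htid : γ*(β^2-1)*t = 2 := by rw [ht]; field_simp
  have hβt : β*t < 1 := by
    rw [ht, show β*(2/(γ*(β^2-1))) = (2*β)/(γ*(β^2-1)) by ring, div_lt_one hX]
    exact hγβ
  have hbγ : 2 < γ*β := by nlinarith [hγβ, hγ0, mul_pos hβ0 hγ0]
  have htγ : t < γ := by
    rw [ht, div_lt_iff₀ hX]
    nlinarith [mul_lt_mul_of_pos_left hγβ hγ0, hbγ]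
  have hbt2 : β*t*(β*t) < 1 := by nlinarith [mul_pos hβ0 ht0]
  have hroot : 1 + γ*t ≤ β^2*t*(γ-t) := by nlinarith [htid, hbt2]
  exact ⟨hγ0, ht0, hβt, htγ, hroot⟩

end Helpers

/-- If a bounded sequence (B^{(k)}) in SL(2,ℝ) satisfies ‖B^{(k)}‖ ≥ β > 1 for all k and the
angles between consecutive most contracted directions s(B^{(k)}) and u(B^{(k-1)}) = s((B^{(k-1)})⁻¹)
satisfy |tan ∠| ≥ γ > 2/(β - β⁻¹) (encoded below for unit vectors a ∈ s(B^{(k)}),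
b ∈ u(B^{(k-1)}) as γ·|cos ∠(a,b)| ≤ |sin ∠(a,b)|), then products grow uniformly
exponentially: there is ρ > 1 with ‖B^{(k+n-1)} ⋯ B^{(k)}‖ > ρⁿ for all k and n ≥ 1. -/
theorem norm_prod_growth (B : ℤ → M2) (hdet : ∀ k, (B k).det = 1)
    (Cb β γ : ℝ) (hC : ∀ k, opNorm (B k) ≤ Cb)
    (hβ : 1 < β) (hβle : ∀ k, β ≤ opNorm (B k))
    (hγ : 2 / (β - β⁻¹) < γ)
    (hangle : ∀ k : ℤ, ∀ a b : Fin 2 → ℝ, vnorm a = 1 → vnorm b = 1 →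
      vnorm ((B k) *ᵥ a) = (opNorm (B k))⁻¹ →
      vnorm ((B (k - 1))⁻¹ *ᵥ b) = (opNorm ((B (k - 1))⁻¹))⁻¹ →
      γ * |a 0 * b 0 + a 1 * b 1| ≤ |a 0 * b 1 - a 1 * b 0|) :
    ∃ ρ > (1 : ℝ), ∀ k : ℤ, ∀ n : ℕ, 1 ≤ n → ρ ^ n < opNorm (seqProd B k n) := by

  classical
  have hsvd := fun k : ℤ => exists_svd (B k) (hdet k)
  choose sF eF uF vF hss hee hse huu hvv hvu hAs hAe hop1 using hsvd
  have hβ0 : (0:ℝ) < β := by linarith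
  set t := 2/(γ*(β^2-1)) with htdef
  obtain ⟨hγ0, ht0, hβt, htγ, hroot⟩ := params β γ t hβ hγ htdef
  set K := β^2*t with hKdef
  have hK0 : 0 ≤ K := by rw [hKdef]; positivity
  have hKβ : K < β := by rw [hKdef]; nlinarith [hβt]
  set r2 := (β^4 + K^2)/(β^2*(1+K^2)) with hr2def
  have hr2_1 : 1 < r2 := by
    rw [hr2def, lt_div_iff₀ (by positivity)]
    nlinarith [mul_pos (by nlinarith : (0:ℝ) < β^2 - 1) (by nlinarith : (0:ℝ) < β^2 - K^2)]
  have hr2_0 : 0 < r2 := lt_trans one_pos hr2_1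
  have hopos : ∀ m : ℤ, 0 < opNorm (B m) := fun m =>
    lt_trans one_pos (lt_of_lt_of_le hβ (hβle m))
  have hangle' : ∀ m : ℤ, γ * |ip (sF m) (uF (m-1))| ≤ |dt (sF m) (uF (m-1))| := by
    intro m
    have h1 : vnorm (sF m) = 1 := vnorm_one _ (hss m)
    have h2 : vnorm (uF (m-1)) = 1 := vnorm_one _ (huu (m-1))
    have h3 : vnorm (B m *ᵥ sF m) = (opNorm (B m))⁻¹ := by
      rw [hAs m, vnorm_smul, vnorm_one _ (hvv m), mul_one,
        abs_of_pos (inv_pos.mpr (hopos m))]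
    obtain ⟨ho, hi⟩ := svd_inv (B (m-1)) (hdet (m-1)) (sF (m-1)) (eF (m-1)) (uF (m-1))
      (vF (m-1)) (hss _) (hee _) (hse _) (huu _) (hvv _) (hvu _) (hAs _) (hAe _) (hop1 _)
    have h4 : vnorm ((B (m-1))⁻¹ *ᵥ uF (m-1)) = (opNorm ((B (m-1))⁻¹))⁻¹ := by
      rw [hi, vnorm_smul, vnorm_one _ (hee _), mul_one,
        abs_of_pos (inv_pos.mpr (hopos (m-1))), ho]
    exact hangle m _ _ h1 h2 h3 h4
  -- main induction
  have main : ∀ (k : ℤ) (n : ℕ),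
      r2^n ≤ ip (seqProd B k n *ᵥ uF (k-1)) (seqProd B k n *ᵥ uF (k-1)) ∧
      |dt (seqProd B k n *ᵥ uF (k-1)) (uF (k + n - 1))|
        ≤ t * |ip (seqProd B k n *ᵥ uF (k-1)) (uF (k + n - 1))| := by
    intro k n
    induction n with
    | zero =>
      have h0 : seqProd B k 0 *ᵥ uF (k-1) = uF (k-1) := by
        rw [show seqProd B k 0 = 1 from rfl, Matrix.one_mulVec]
      have hidx : (k + ((0:ℕ):ℤ) - 1) = k - 1 := by push_cast; ring
      rw [h0, hidx, pow_zero, huu (k-1), dt_self, abs_zero]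
      refine ⟨le_refl 1, ?_⟩
      rw [abs_one, mul_one]
      exact ht0.le
    | succ n ih =>
      obtain ⟨ihn, ihv⟩ := ih
      set m : ℤ := k + (n:ℤ) with hm
      set x := seqProd B k n *ᵥ uF (k-1) with hxdef
      have hstep : seqProd B k (n+1) *ᵥ uF (k-1) = B m *ᵥ x := by
        rw [show seqProd B k (n+1) = B (k + (n:ℤ)) * seqProd B k n from rfl,
          ← Matrix.mulVec_mulVec, hm]
      have hxe := expand (sF m) (eF m) x (hss m) (hee m) (hse m)
      have hue := expand (sF m) (eF m) (uF (m-1)) (hss m) (hee m) (hse m)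
      set c := ip x (sF m) with hc
      set d := ip x (eF m) with hd
      set c1 := ip (uF (m-1)) (sF m) with hc1
      set d1 := ip (uF (m-1)) (eF m) with hd1
      clear_value c d c1 d1
      have hixx : ip x x = c^2 + d^2 := by
        conv_lhs => rw [hxe]
        rw [ip_comb _ _ _ _ _ _ (hss m) (hee m) (hse m)]; ring
      have hu1 : c1^2 + d1^2 = 1 := by
        have h := huu (m-1)
        conv_lhs at h => rw [hue]
        rw [ip_comb _ _ _ _ _ _ (hss m) (hee m) (hse m)] at h
        nlinarith [h]
      have hγc1 : γ * |c1| ≤ |d1| := by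
        have h := hangle' m
        have e1 : ip (sF m) (uF (m-1)) = c1 := by rw [ip_comm]; exact hc1.symm
        have e2 : dt (sF m) (uF (m-1)) = d1 * dt (sF m) (eF m) := by
          conv_lhs => rw [hue]
          rw [dt_comb_right, dt_self]; ring
        rw [e1, e2, abs_mul, abs_dt_one _ _ (hss m) (hee m) (hse m), mul_one] at h
        exact h
      have hinv2 : |c*d1 - d*c1| ≤ t * |c*c1 + d*d1| := by
        have h := ihv
        have e3 : dt x (uF (m-1)) = (c*d1 - d*c1) * dt (sF m) (eF m) := by
          conv_lhs => rw [hxe, hue]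
          rw [dt_comb_left, dt_comb_right, dt_comb_right]
          simp only [dt_self, show dt (eF m) (sF m) = - dt (sF m) (eF m) from dt_antisymm _ _]
          ring
        have e4 : ip x (uF (m-1)) = c*c1 + d*d1 := by
          conv_lhs => rw [hxe, hue]
          rw [ip_comb _ _ _ _ _ _ (hss m) (hee m) (hse m)]
        rw [e3, e4, abs_mul, abs_dt_one _ _ (hss m) (hee m) (hse m), mul_one] at h
        exact h
      have hao := angle_step γ t c d c1 d1 hγ0 ht0 hu1 hγc1 hinv2
      have hcd : |c| ≤ K * |d| := by
        have h1 : (1 + γ*t) * |d| ≤ ((γ-t) * K) * |d| := by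
          apply mul_le_mul_of_nonneg_right _ (abs_nonneg d)
          rw [hKdef]; nlinarith [hroot]
        have h2 : (γ-t) * |c| ≤ (γ-t) * (K * |d|) := by nlinarith [hao, h1]
        exact le_of_mul_le_mul_left h2 (by linarith)
      have hnew : B m *ᵥ x = (c * (opNorm (B m))⁻¹) • vF m + (d * opNorm (B m)) • uF m := by
        conv_lhs => rw [hxe]
        rw [mulVec_comb, hAs m, hAe m, smul_smul, smul_smul]
      constructor
      · rw [hstep, hnew, ip_comb _ _ _ _ _ _ (hvv m) (huu m) (hvu m)]
        calc r2^(n+1) = r2 * r2^n := by ring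
          _ ≤ r2 * ip x x := mul_le_mul_of_nonneg_left ihn hr2_0.le
          _ = r2 * (c^2 + d^2) := by rw [hixx]
          _ ≤ (c * (opNorm (B m))⁻¹) * (c * (opNorm (B m))⁻¹)
              + (d * opNorm (B m)) * (d * opNorm (B m)) := by
              rw [hr2def]
              exact grow β (opNorm (B m)) K c d hβ (hβle m) hK0 hKβ hcd
      · have hidx2 : (k + ((n:ℕ)+1 : ℤ) - 1) = m := by rw [hm]; push_cast; ring
        rw [hstep,
          show (k + (((n:ℕ)+1 : ℕ) : ℤ) - 1) = m by rw [hm]; push_cast; ring,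
          hnew]
        have e5 : dt ((c * (opNorm (B m))⁻¹) • vF m + (d * opNorm (B m)) • uF m) (uF m)
            = (c * (opNorm (B m))⁻¹) * dt (vF m) (uF m) := by
          rw [dt_comb_left, dt_self]; ring
        have e6 : ip ((c * (opNorm (B m))⁻¹) • vF m + (d * opNorm (B m)) • uF m) (uF m)
            = d * opNorm (B m) := by
          rw [ip_comb_left, hvu m, huu m]; ring
        rw [e5, e6, abs_mul, abs_dt_one _ _ (hvv m) (huu m) (hvu m), mul_one,
          abs_mul, abs_mul, abs_of_pos (inv_pos.mpr (hopos m)), abs_of_pos (hopos m)]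
        exact newinv (opNorm (B m)) β t c d K hcd hKdef ht0 hβ (hβle m)
  -- conclusion
  refine ⟨Real.sqrt ((1+r2)/2), ?_, ?_⟩
  · have h2 : (1:ℝ) < (1+r2)/2 := by linarith
    have h3 : (Real.sqrt ((1+r2)/2))^2 = (1+r2)/2 := Real.sq_sqrt (by linarith)
    nlinarith [Real.sqrt_nonneg ((1+r2)/2)]
  · intro k n hn
    obtain ⟨h1, _⟩ := main k n
    have hux : vnorm (seqProd B k n *ᵥ uF (k-1)) ≤ opNorm (seqProd B k n) := by
      have h := vnorm_mulVec_le (seqProd B k n) (uF (k-1))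
      rwa [vnorm_one _ (huu (k-1)), mul_one] at h
    have hvn2 : r2^n ≤ (vnorm (seqProd B k n *ᵥ uF (k-1)))^2 := by
      rw [vnorm_sq]; exact h1
    have hop0 : 0 ≤ opNorm (seqProd B k n) := le_trans (vnorm_nonneg _) hux
    have hρsq : (Real.sqrt ((1+r2)/2))^2 = (1+r2)/2 := Real.sq_sqrt (by linarith)
    have hlt : ((1+r2)/2)^n < r2^n :=
      pow_lt_pow_left₀ (by linarith) (by linarith) (Nat.one_le_iff_ne_zero.mp hn)
    have hfin : ((Real.sqrt ((1+r2)/2))^n)^2 < (opNorm (seqProd B k n))^2 := by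
      rw [← pow_mul, mul_comm n 2, pow_mul, hρsq]
      calc ((1+r2)/2)^n < r2^n := hlt
        _ ≤ (vnorm (seqProd B k n *ᵥ uF (k-1)))^2 := hvn2
        _ ≤ (opNorm (seqProd B k n))^2 := by
            nlinarith [vnorm_nonneg (seqProd B k n *ᵥ uF (k-1)), hux]
    exact lt_of_pow_lt_pow_left₀ 2 hop0 hfin
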